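/- Suppose κ < 0, m > 0, c ≠ 0, and r₊ = (−2/(3κ))^{1/2} satisfies g(r₊) = 0, which is equivalent to 9√3 c^2 (−κ)^{1/2} − 4m = 0. Then the second derivative g''(r₊) is strictly positive. -/

import Mathlib

/-- If `κ < 0`, `m > 0`, `c ≠ 0`, `r₊ = (−2/(3κ))^{1/2}` and `g(r₊) = 0`
(equivalently `9√3 c² (−κ)^{1/2} − 4m = 0`), then `g''(r₊) > 0`, where
`g''(r) = 2c²/r³ − 648 m κ/(12 − 9κr²)^{5/2} − 29160 m κ² r²/(12 − 9κr²)^{7/2}`. -/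
theorem stmt_9 (κ m c rp : ℝ) (hκ : κ < 0) (hm : 0 < m) (hc : c ≠ 0)
    (hr : rp = Real.sqrt (-2 / (3 * κ)))
    (hzero : 9 * Real.sqrt 3 * c ^ 2 * Real.sqrt (-κ) - 4 * m = 0) :
    0 < 2 * c ^ 2 / rp ^ 3
        - 648 * m * κ / (12 - 9 * κ * rp ^ 2) ^ ((5 : ℝ) / 2)
        - 29160 * m * κ ^ 2 * rp ^ 2 / (12 - 9 * κ * rp ^ 2) ^ ((7 : ℝ) / 2) := by
  have hκ' : 0 < -κ := by linarith
  set s := Real.sqrt (-κ) with hs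
  have hs2 : s ^ 2 = -κ := Real.sq_sqrt hκ'.le
  have hspos : 0 < s := Real.sqrt_pos.mpr hκ'
  set t := Real.sqrt 2 with ht
  set u := Real.sqrt 3 with hu
  have ht2 : t ^ 2 = 2 := Real.sq_sqrt (by norm_num)
  have hu2 : u ^ 2 = 3 := Real.sq_sqrt (by norm_num)
  have htpos : 0 < t := Real.sqrt_pos.mpr (by norm_num)
  have hupos : 0 < u := Real.sqrt_pos.mpr (by norm_num)
  have hκs : κ = -s ^ 2 := by linarith
  have hm' : m = 9 * u * c ^ 2 * s / 4 := by linarith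
  have hrpe : rp = t / (u * s) := by
    rw [hr, show -2 / (3 * κ) = 2 / (3 * (-κ)) by rw [mul_neg, div_neg, neg_div],
      Real.sqrt_div (by norm_num : (0:ℝ) ≤ 2), Real.sqrt_mul (by norm_num : (0:ℝ) ≤ 3)]
  have h18 : Real.sqrt 18 = 3 * t := by
    rw [ht, show (18:ℝ) = 3 ^ 2 * 2 by norm_num, Real.sqrt_mul (by positivity),
      Real.sqrt_sq (by norm_num)]
  have h5 : (18:ℝ) ^ ((5:ℝ)/2) = 324 * (3 * t) := by
    rw [show (5:ℝ)/2 = 2 + 1/2 by norm_num, Real.rpow_add (by norm_num),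
      ← Real.sqrt_eq_rpow, h18]
    norm_num
  have h7 : (18:ℝ) ^ ((7:ℝ)/2) = 5832 * (3 * t) := by
    rw [show (7:ℝ)/2 = 3 + 1/2 by norm_num, Real.rpow_add (by norm_num),
      ← Real.sqrt_eq_rpow, h18]
    norm_num
  have hrp2 : 12 - 9 * κ * rp ^ 2 = 18 := by
    rw [hrpe, hκs]
    field_simp
    nlinarith [ht2, hu2, sq_nonneg s]
  have ht4 : t ^ 4 = 4 := by rw [show t^4 = (t^2)^2 by ring, ht2]; norm_num
  have ht6 : t ^ 6 = 8 := by rw [show t^6 = (t^2)^3 by ring, ht2]; norm_num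
  have hu3 : u ^ 3 = 3 * u := by rw [show u^3 = u^2*u by ring, hu2]
  have hc2 : 0 < c ^ 2 := by positivity
  rw [hrp2, h5, h7, hrpe, hκs, hm']
  have key : 2 * c ^ 2 / (t / (u * s)) ^ 3
      - 648 * (9 * u * c ^ 2 * s / 4) * (-s ^ 2) / (324 * (3 * t))
      - 29160 * (9 * u * c ^ 2 * s / 4) * (-s ^ 2) ^ 2 * (t / (u * s)) ^ 2 / (5832 * (3 * t))
      = t * u * (c ^ 2 * s ^ 3) := by
    have hu5 : u ^ 5 = 9 * u := by rw [show u^5 = (u^2)^2*u by ring, hu2]; norm_num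
    field_simp
    ring_nf
    simp only [ht2, hu2, ht4, ht6, hu3, hu5]
    linear_combination 45349632 * (u ^ 2 + 3) * hu2
  rw [key]
  positivity
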